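/- Let α > 2. For every M > 0 there exists a constant c(α,M) > 0 such that every (x,t) ∈ Ω_{α,M} satisfies |x| ≤ c(α,M); in other words, the sublevel set Ω_{α,M} is contained in the cylinder {(x,t) ∈ G : |x| ≤ c(α,M)}. -/

import Mathlib

open MeasureTheory Filter
open scoped BigOperators ENNReal NNReal

noncomputable section

/-- Points of the Métivier group `G = ℝ^{2n} × ℝ^m`. -/
abbrev GrpPt (n m : ℕ) := (Fin (2*n) → ℝ) × (Fin m → ℝ)

/-- Euclidean norm on `Fin k → ℝ`. -/
def e2norm {k : ℕ} (x : Fin k → ℝ) : ℝ := Real.sqrt (∑ i, (x i)^2)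

/-- Kaplan norm `N(x,t) = (|x|^4 + 16|t|^2)^(1/4)`. -/
def kN {n m : ℕ} (p : GrpPt n m) : ℝ := (e2norm p.1 ^ 4 + 16 * e2norm p.2 ^ 2) ^ ((1:ℝ)/4)

/-- Group multiplication of the Métivier group. -/
def gmul {n m : ℕ} (J : Fin m → Matrix (Fin (2*n)) (Fin (2*n)) ℝ) (p q : GrpPt n m) : GrpPt n m :=
  (p.1 + q.1, p.2 + q.2 + fun k => (1/2 : ℝ) * ∑ i, (J k).mulVec p.1 i * q.1 i)

/-- Horizontal left-invariant vector field `X_j`. -/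
def XD {n m : ℕ} (J : Fin m → Matrix (Fin (2*n)) (Fin (2*n)) ℝ)
    {E : Type*} [NormedAddCommGroup E] [NormedSpace ℝ E]
    (j : Fin (2*n)) (f : GrpPt n m → E) (p : GrpPt n m) : E :=
  fderiv ℝ f p (Pi.single j 1, 0)
    + (1/2 : ℝ) • ∑ k, ((J k).mulVec p.1 j) • fderiv ℝ f p (0, Pi.single k 1)

/-- Squared length of the horizontal gradient. -/
def gradSq {n m : ℕ} (J : Fin m → Matrix (Fin (2*n)) (Fin (2*n)) ℝ)
    (f : GrpPt n m → ℝ) (p : GrpPt n m) : ℝ := ∑ j, (XD J j f p)^2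

/-- Sub-Laplacian `L f = -∑ X_j (X_j f)`. -/
def LSub {n m : ℕ} (J : Fin m → Matrix (Fin (2*n)) (Fin (2*n)) ℝ)
    {E : Type*} [NormedAddCommGroup E] [NormedSpace ℝ E]
    (f : GrpPt n m → E) (p : GrpPt n m) : E := - ∑ j, XD J j (XD J j f) p

/-- Weight `w_α = exp (-N^α)`. -/
def wA {n m : ℕ} (α : ℝ) (p : GrpPt n m) : ℝ := Real.exp (-(kN p ^ α))

/-- Potential `V_α = -(1/4) |grad w_α|²/w_α² - (1/2) (L w_α)/w_α`. -/
def VA {n m : ℕ} (J : Fin m → Matrix (Fin (2*n)) (Fin (2*n)) ℝ) (α : ℝ) (p : GrpPt n m) : ℝ :=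
  -(1/4) * gradSq J (wA α) p / (wA α p)^2 - (1/2) * LSub J (wA α) p / wA α p

namespace Cyl

variable {n m : ℕ}

def Sf (p : GrpPt n m) : ℝ := ∑ i, p.1 i ^ 2
def Tf (p : GrpPt n m) : ℝ := ∑ k, p.2 k ^ 2
def Uf (p : GrpPt n m) : ℝ := Sf p ^ 2 + 16 * Tf p

def PX (i : Fin (2*n)) : GrpPt n m →L[ℝ] ℝ :=
  (ContinuousLinearMap.proj i).comp (ContinuousLinearMap.fst ℝ (Fin (2*n) → ℝ) (Fin m → ℝ))
def PT (k : Fin m) : GrpPt n m →L[ℝ] ℝ :=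
  (ContinuousLinearMap.proj k).comp (ContinuousLinearMap.snd ℝ (Fin (2*n) → ℝ) (Fin m → ℝ))

@[simp] lemma PX_apply (i : Fin (2*n)) (v : GrpPt n m) : PX i v = v.1 i := rfl
@[simp] lemma PT_apply (k : Fin m) (v : GrpPt n m) : PT k v = v.2 k := rfl

def SL (p : GrpPt n m) : GrpPt n m →L[ℝ] ℝ := ∑ i, (2 * p.1 i) • PX i
def TL (p : GrpPt n m) : GrpPt n m →L[ℝ] ℝ := ∑ k, (2 * p.2 k) • PT k
def UL (p : GrpPt n m) : GrpPt n m →L[ℝ] ℝ := (2 * Sf p) • SL p + (16:ℝ) • TL p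

lemma hPX (i : Fin (2*n)) (p : GrpPt n m) :
    HasFDerivAt (fun q : GrpPt n m => q.1 i) (PX i) p := (PX i).hasFDerivAt

lemma hPT (k : Fin m) (p : GrpPt n m) :
    HasFDerivAt (fun q : GrpPt n m => q.2 k) (PT k) p := (PT k).hasFDerivAt

lemma hSf (p : GrpPt n m) : HasFDerivAt (Sf : GrpPt n m → ℝ) (SL p) p := by
  have h : ∀ i : Fin (2*n), HasFDerivAt (fun q : GrpPt n m => q.1 i ^ 2)
      ((2 * p.1 i) • PX i) p := by
    intro i
    have h2 : (fun q : GrpPt n m => q.1 i ^ 2) = fun q : GrpPt n m => q.1 i * q.1 i := by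
      funext q; ring
    rw [h2]
    have := (hPX i p).fun_mul (hPX i p)
    convert! this using 1
    rw [show (2:ℝ) * p.1 i = p.1 i + p.1 i by ring, add_smul]
  exact HasFDerivAt.fun_sum (fun i _ => h i)

lemma hTf (p : GrpPt n m) : HasFDerivAt (Tf : GrpPt n m → ℝ) (TL p) p := by
  have h : ∀ k : Fin m, HasFDerivAt (fun q : GrpPt n m => q.2 k ^ 2)
      ((2 * p.2 k) • PT k) p := by
    intro k
    have h2 : (fun q : GrpPt n m => q.2 k ^ 2) = fun q : GrpPt n m => q.2 k * q.2 k := by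
      funext q; ring
    rw [h2]
    have := (hPT k p).fun_mul (hPT k p)
    convert! this using 1
    rw [show (2:ℝ) * p.2 k = p.2 k + p.2 k by ring, add_smul]
  exact HasFDerivAt.fun_sum (fun k _ => h k)

lemma hUf (p : GrpPt n m) : HasFDerivAt (Uf : GrpPt n m → ℝ) (UL p) p := by
  have h1 : HasFDerivAt (fun q : GrpPt n m => Sf q ^ 2) ((2 * Sf p) • SL p) p := by
    have h2 : (fun q : GrpPt n m => Sf q ^ 2) = fun q : GrpPt n m => Sf q * Sf q := by
      funext q; ring
    rw [h2]
    have := (hSf p).fun_mul (hSf p)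
    convert! this using 1
    rw [show (2:ℝ) * Sf p = Sf p + Sf p by ring, add_smul]
  exact h1.add ((hTf p).const_mul 16)

variable (J : Fin m → Matrix (Fin (2*n)) (Fin (2*n)) ℝ)

def Rowf (k : Fin m) (j : Fin (2*n)) (p : GrpPt n m) : ℝ := ∑ i, J k j i * p.1 i
def Af (j : Fin (2*n)) (p : GrpPt n m) : ℝ :=
  4 * Sf p * p.1 j + 16 * ∑ k, p.2 k * Rowf J k j p
def Bf (j : Fin (2*n)) (p : GrpPt n m) : ℝ :=
  4 * Sf p + 8 * p.1 j ^ 2 + 16 * ∑ k, p.2 k * J k j j + 8 * ∑ k, (Rowf J k j p)^2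

def RL (k : Fin m) (j : Fin (2*n)) : GrpPt n m →L[ℝ] ℝ := ∑ i, (J k j i) • PX i
def AL (j : Fin (2*n)) (p : GrpPt n m) : GrpPt n m →L[ℝ] ℝ :=
  ((4 * Sf p) • PX j + p.1 j • ((4:ℝ) • SL p))
    + (16:ℝ) • ∑ k, (p.2 k • RL J k j + Rowf J k j p • PT k)

lemma hRowf (k : Fin m) (j : Fin (2*n)) (p : GrpPt n m) :
    HasFDerivAt (Rowf J k j) (RL J k j) p :=
  HasFDerivAt.fun_sum (fun i _ => (hPX i p).const_mul (J k j i))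

lemma hAf (j : Fin (2*n)) (p : GrpPt n m) :
    HasFDerivAt (Af J j) (AL J j p) p := by
  have h1 := ((hSf p).const_mul (4:ℝ)).fun_mul (hPX j p)
  have h2 := (HasFDerivAt.fun_sum
    (fun k (_ : k ∈ Finset.univ) => (hPT k p).fun_mul (hRowf J k j p))).const_mul (16:ℝ)
  exact h1.add h2

lemma mulVec_row (k : Fin m) (j : Fin (2*n)) (p : GrpPt n m) :
    (J k).mulVec p.1 j = Rowf J k j p := by
  simp [Matrix.mulVec, dotProduct, Rowf]

-- evaluation lemmas
lemma SL_e (p : GrpPt n m) (j : Fin (2*n)) :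
    SL p (Pi.single j 1, (0 : Fin m → ℝ)) = 2 * p.1 j := by
  simp [SL, Pi.single_apply]

lemma SL_t (p : GrpPt n m) (k : Fin m) :
    SL p ((0 : Fin (2*n) → ℝ), Pi.single k 1) = 0 := by
  simp [SL]

lemma TL_e (p : GrpPt n m) (j : Fin (2*n)) :
    TL p (Pi.single j 1, (0 : Fin m → ℝ)) = 0 := by
  simp [TL]

lemma TL_t (p : GrpPt n m) (k : Fin m) :
    TL p ((0 : Fin (2*n) → ℝ), Pi.single k 1) = 2 * p.2 k := by
  simp [TL, Pi.single_apply]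

lemma UL_e (p : GrpPt n m) (j : Fin (2*n)) :
    UL p (Pi.single j 1, (0 : Fin m → ℝ)) = 4 * Sf p * p.1 j := by
  simp [UL, SL_e, TL_e]; ring

lemma UL_t (p : GrpPt n m) (k : Fin m) :
    UL p ((0 : Fin (2*n) → ℝ), Pi.single k 1) = 32 * p.2 k := by
  simp [UL, SL_t, TL_t]; ring

lemma RL_e (k : Fin m) (j j' : Fin (2*n)) :
    RL J k j (Pi.single j' 1, (0 : Fin m → ℝ)) = J k j j' := by
  simp [RL, Pi.single_apply]

lemma RL_t (k k' : Fin m) (j : Fin (2*n)) :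
    RL J k j ((0 : Fin (2*n) → ℝ), Pi.single k' 1) = 0 := by
  simp [RL]

lemma AL_e (j : Fin (2*n)) (p : GrpPt n m) :
    AL J j p (Pi.single j 1, (0 : Fin m → ℝ))
      = 4 * Sf p + 8 * p.1 j ^ 2 + 16 * ∑ k, p.2 k * J k j j := by
  simp [AL, SL_e, RL_e, Pi.single_apply, Finset.mul_sum]
  ring

lemma AL_t (j : Fin (2*n)) (p : GrpPt n m) (k : Fin m) :
    AL J j p ((0 : Fin (2*n) → ℝ), Pi.single k 1) = 16 * Rowf J k j p := by
  simp [AL, SL_t, RL_t, Pi.single_apply, mul_ite, Finset.mul_sum]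

-- scalar chain functions
def phi1 (α r : ℝ) : ℝ := -(α/4) * r ^ (α/4 - 1 : ℝ) * Real.exp (-(r ^ (α/4 : ℝ)))
def phi2 (α r : ℝ) : ℝ :=
  ((α/4)^2 * r ^ (α/2 - 2 : ℝ) - (α/4)*(α/4-1) * r ^ (α/4 - 2 : ℝ))
    * Real.exp (-(r ^ (α/4 : ℝ)))

lemma hphi1 (α r : ℝ) (hr : 0 < r) : HasDerivAt (phi1 α) (phi2 α r) r := by
  have hrne := hr.ne'
  have h1 : HasDerivAt (fun s : ℝ => s ^ (α/4 - 1 : ℝ)) ((α/4-1) * r ^ (α/4 - 2 : ℝ)) r := by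
    have := Real.hasDerivAt_rpow_const (x := r) (p := α/4-1) (Or.inl hrne)
    convert this using 2
    ring
  have h1' := h1.const_mul (-(α/4))
  have h2 : HasDerivAt (fun s : ℝ => Real.exp (-(s ^ (α/4 : ℝ))))
      (Real.exp (-(r ^ (α/4 : ℝ))) * (-((α/4) * r ^ (α/4 - 1 : ℝ)))) r :=
    ((Real.hasDerivAt_rpow_const (x := r) (p := α/4) (Or.inl hrne)).neg).exp
  have h3 := h1'.fun_mul h2
  have key : r ^ (α/4-1 : ℝ) * r ^ (α/4-1 : ℝ) = r ^ (α/2-2 : ℝ) := by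
    rw [← Real.rpow_add hr]; congr 1; ring
  convert! h3 using 1
  unfold phi2
  linear_combination (-(α/4)^2 * Real.exp (-(r ^ (α/4 : ℝ)))) * key

lemma wA_eq (α : ℝ) : (wA (n:=n) (m:=m) α) = fun p => Real.exp (-(Uf p ^ (α/4 : ℝ))) := by
  funext p
  have h1 : e2norm p.1 ^ 4 = Sf p ^ 2 := by
    rw [e2norm, show (4:ℕ) = 2*2 from rfl, pow_mul, Real.sq_sqrt (by positivity)]; rfl
  have h2 : e2norm p.2 ^ 2 = Tf p := by
    rw [e2norm, Real.sq_sqrt (by positivity)]; rfl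
  have hU0 : (0:ℝ) ≤ Uf p := by
    have : (0:ℝ) ≤ Tf p := Finset.sum_nonneg (fun k _ => sq_nonneg _)
    unfold Uf; positivity
  rw [wA, kN, h1, h2]
  congr 1
  rw [show Sf p ^2 + 16 * Tf p = Uf p from rfl]
  rw [← Real.rpow_mul hU0]
  congr 1
  ring

lemma hwA (α : ℝ) (p : GrpPt n m) (hp : 0 < Uf p) :
    HasFDerivAt (wA (n:=n) (m:=m) α) ((phi1 α (Uf p)) • UL p) p := by
  rw [wA_eq α]
  have hrp : HasDerivAt (fun s : ℝ => s ^ (α/4 : ℝ)) ((α/4) * Uf p ^ (α/4 - 1 : ℝ)) (Uf p) :=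
    Real.hasDerivAt_rpow_const (Or.inl hp.ne')
  have h4 : HasFDerivAt (fun q : GrpPt n m => Uf q ^ (α/4 : ℝ))
      (((α/4) * Uf p ^ (α/4 - 1 : ℝ)) • UL p) p := hrp.comp_hasFDerivAt p (hUf p)
  have h5 := h4.fun_neg.exp
  convert! h5 using 1
  rw [smul_neg, smul_smul]
  refine Eq.trans ?_ (neg_smul _ _)
  congr 1
  unfold phi1; ring

lemma xd_w (α : ℝ) (p : GrpPt n m) (hp : 0 < Uf p) (j : Fin (2*n)) :
    XD J j (wA α) p = phi1 α (Uf p) * Af J j p := by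
  have hw := hwA (n:=n) (m:=m) α p hp
  simp only [XD, hw.fderiv, ContinuousLinearMap.smul_apply, smul_eq_mul]
  rw [UL_e]
  simp_rw [UL_t, mulVec_row]
  have hterm : ∀ k : Fin m, Rowf J k j p * (phi1 α (Uf p) * (32 * p.2 k))
      = phi1 α (Uf p) * (32 * (p.2 k * Rowf J k j p)) := fun k => by ring
  simp_rw [hterm]
  rw [← Finset.mul_sum, ← Finset.mul_sum]
  unfold Af
  ring

lemma Uf_cont : Continuous (Uf : GrpPt n m → ℝ) := by
  apply Continuous.add
  · exact (continuous_finset_sum _ fun i _ =>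
      ((continuous_apply i).comp continuous_fst).pow 2).pow 2
  · exact continuous_const.mul (continuous_finset_sum _ fun k _ =>
      ((continuous_apply k).comp continuous_snd).pow 2)

lemma xd_xd_w (α : ℝ) (p : GrpPt n m) (hp : 0 < Uf p) (j : Fin (2*n)) :
    XD J j (XD J j (wA α)) p
      = phi2 α (Uf p) * (Af J j p)^2 + phi1 α (Uf p) * Bf J j p := by
  have hopen : IsOpen {q : GrpPt n m | 0 < Uf q} := isOpen_lt continuous_const Uf_cont
  have hev : XD J j (wA α) =ᶠ[nhds p] fun q => phi1 α (Uf q) * Af J j q :=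
    eventually_of_mem (hopen.mem_nhds hp) (fun q hq => xd_w J α q hq j)
  have hG : HasFDerivAt (fun q : GrpPt n m => phi1 α (Uf q) * Af J j q)
      (phi1 α (Uf p) • AL J j p + Af J j p • (phi2 α (Uf p) • UL p)) p := by
    have hphi : HasFDerivAt (fun q : GrpPt n m => phi1 α (Uf q)) ((phi2 α (Uf p)) • UL p) p :=
      (hphi1 α (Uf p) hp).comp_hasFDerivAt p (hUf p)
    exact hphi.fun_mul (hAf J j p)
  have hfd : fderiv ℝ (XD J j (wA α)) p
      = phi1 α (Uf p) • AL J j p + Af J j p • (phi2 α (Uf p) • UL p) := by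
    rw [hev.fderiv_eq]; exact hG.fderiv
  simp only [XD, hfd, ContinuousLinearMap.add_apply, ContinuousLinearMap.smul_apply, smul_eq_mul]
  rw [AL_e, UL_e]
  simp_rw [AL_t, UL_t, mulVec_row]
  have hterm : ∀ k : Fin m,
      Rowf J k j p * (phi1 α (Uf p) * (16 * Rowf J k j p)
        + Af J j p * (phi2 α (Uf p) * (32 * p.2 k)))
      = 16 * phi1 α (Uf p) * (Rowf J k j p)^2
        + 32 * (phi2 α (Uf p) * Af J j p) * (p.2 k * Rowf J k j p) := fun k => by ring
  simp_rw [hterm]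
  rw [Finset.sum_add_distrib, ← Finset.mul_sum, ← Finset.mul_sum]
  unfold Af Bf
  ring

lemma gradSq_eq (α : ℝ) (p : GrpPt n m) (hp : 0 < Uf p) :
    gradSq J (wA α) p = (phi1 α (Uf p))^2 * ∑ j, (Af J j p)^2 := by
  unfold gradSq
  simp_rw [xd_w J α p hp, mul_pow]
  rw [← Finset.mul_sum]

lemma LSub_eq (α : ℝ) (p : GrpPt n m) (hp : 0 < Uf p) :
    LSub J (wA α) p
      = -(phi2 α (Uf p) * ∑ j, (Af J j p)^2 + phi1 α (Uf p) * ∑ j, Bf J j p) := by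
  unfold LSub
  simp_rw [xd_xd_w J α p hp]
  rw [Finset.sum_add_distrib, ← Finset.mul_sum, ← Finset.mul_sum]

lemma VA_eq (α : ℝ) (p : GrpPt n m) (hp : 0 < Uf p) :
    VA J α p
      = -(1/4) * (α/4)^2 * (Uf p ^ (α/4 - 1 : ℝ))^2 * (∑ j, (Af J j p)^2)
        + (1/2) * ((α/4)^2 * Uf p ^ (α/2 - 2 : ℝ)
            - (α/4)*(α/4-1) * Uf p ^ (α/4 - 2 : ℝ)) * (∑ j, (Af J j p)^2)
        - (1/2) * (α/4) * (Uf p ^ (α/4 - 1 : ℝ)) * (∑ j, Bf J j p) := by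
  have hE : Real.exp (-(Uf p ^ (α/4 : ℝ))) ≠ 0 := (Real.exp_pos _).ne'
  rw [VA, gradSq_eq J α p hp, LSub_eq J α p hp,
    show wA α p = Real.exp (-(Uf p ^ (α/4 : ℝ))) from by rw [wA_eq]]
  unfold phi1 phi2
  field_simp
  ring

-- ============ algebraic estimates ============

lemma skew_quad (M : Matrix (Fin (2*n)) (Fin (2*n)) ℝ) (hM : M.transpose = -M)
    (v : Fin (2*n) → ℝ) : ∑ j, v j * ∑ i, M j i * v i = 0 := by
  have hMij : ∀ i j, M i j = - M j i := by
    intro i j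
    have := congrFun (congrFun hM j) i
    simpa [Matrix.transpose_apply, Matrix.neg_apply] using this
  have h1 : ∑ j, v j * ∑ i, M j i * v i = ∑ j, ∑ i, M j i * v j * v i := by
    refine Finset.sum_congr rfl fun j _ => ?_
    rw [Finset.mul_sum]
    exact Finset.sum_congr rfl fun i _ => by ring
  have h2 : (∑ j, ∑ i, M j i * v j * v i) = - ∑ j, ∑ i, M j i * v j * v i := by
    nth_rewrite 1 [Finset.sum_comm]
    rw [← Finset.sum_neg_distrib]
    refine Finset.sum_congr rfl fun i _ => ?_
    rw [← Finset.sum_neg_distrib]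
    refine Finset.sum_congr rfl fun j _ => ?_
    rw [hMij j i]
    ring
  have h3 : (∑ j, ∑ i, M j i * v j * v i) = 0 := by linarith
  rw [h1, h3]

def Zf (p : GrpPt n m) : ℝ := ∑ j, (∑ k, p.2 k * Rowf J k j p)^2

lemma Q_eq (hskew : ∀ k, (J k).transpose = -(J k)) (p : GrpPt n m) :
    ∑ j, (Af J j p)^2 = 16 * Sf p^3 + 256 * Zf J p := by
  have hW : ∀ k : Fin m, ∑ j, p.1 j * Rowf J k j p = 0 := fun k => by
    unfold Rowf; exact skew_quad (J k) (hskew k) p.1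
  have hsum : ∑ j, p.1 j * ∑ k, p.2 k * Rowf J k j p = 0 := by
    simp_rw [Finset.mul_sum]
    rw [Finset.sum_comm]
    refine Finset.sum_eq_zero fun k _ => ?_
    have h : ∀ j, p.1 j * (p.2 k * Rowf J k j p)
        = p.2 k * (p.1 j * Rowf J k j p) := fun j => by ring
    simp_rw [h]
    rw [← Finset.mul_sum, hW k, mul_zero]
  unfold Af Zf
  have expand : ∀ j, (4 * Sf p * p.1 j + 16 * ∑ k, p.2 k * Rowf J k j p)^2
      = 16 * Sf p^2 * p.1 j^2 + 128 * Sf p * (p.1 j * ∑ k, p.2 k * Rowf J k j p)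
        + 256 * (∑ k, p.2 k * Rowf J k j p)^2 := fun j => by ring
  simp_rw [expand]
  rw [Finset.sum_add_distrib, Finset.sum_add_distrib, ← Finset.mul_sum, ← Finset.mul_sum,
    ← Finset.mul_sum, hsum, mul_zero]
  have : (∑ j, p.1 j ^2) = Sf p := rfl
  rw [this]
  ring

lemma Z_upper (p : GrpPt n m) :
    Zf J p ≤ (∑ k, ∑ j, ∑ i, (J k j i)^2) * (Tf p * Sf p) := by
  have step1 : Zf J p ≤ Tf p * ∑ j, ∑ k, (Rowf J k j p)^2 := by
    rw [Finset.mul_sum]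
    refine Finset.sum_le_sum fun j _ => ?_
    have := Finset.sum_mul_sq_le_sq_mul_sq Finset.univ (fun k => p.2 k) (fun k => Rowf J k j p)
    simpa [Tf] using this
  have step2 : ∑ j, ∑ k, (Rowf J k j p)^2 ≤ (∑ k, ∑ j, ∑ i, (J k j i)^2) * Sf p := by
    rw [Finset.sum_comm]
    rw [Finset.sum_mul]
    refine Finset.sum_le_sum fun k _ => ?_
    rw [Finset.sum_mul]
    refine Finset.sum_le_sum fun j _ => ?_
    have := Finset.sum_mul_sq_le_sq_mul_sq Finset.univ (fun i => J k j i) (fun i => p.1 i)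
    simpa [Rowf, Sf] using this
  have hT0 : 0 ≤ Tf p := Finset.sum_nonneg fun _ _ => sq_nonneg _
  calc Zf J p ≤ Tf p * ∑ j, ∑ k, (Rowf J k j p)^2 := step1
    _ ≤ Tf p * ((∑ k, ∑ j, ∑ i, (J k j i)^2) * Sf p) := by
        exact mul_le_mul_of_nonneg_left step2 hT0
    _ = (∑ k, ∑ j, ∑ i, (J k j i)^2) * (Tf p * Sf p) := by ring

lemma Bf_eq (hskew : ∀ k, (J k).transpose = -(J k)) (j : Fin (2*n)) (p : GrpPt n m) :
    Bf J j p = 4 * Sf p + 8 * p.1 j ^ 2 + 8 * ∑ k, (Rowf J k j p)^2 := by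
  have hdiag : ∀ k, J k j j = 0 := by
    intro k
    have := congrFun (congrFun (hskew k) j) j
    simp only [Matrix.transpose_apply, Matrix.neg_apply] at this
    linarith
  unfold Bf
  have : ∑ k, p.2 k * J k j j = 0 := Finset.sum_eq_zero fun k _ => by rw [hdiag k, mul_zero]
  rw [this]
  ring

lemma Rsum_bounds (hskew : ∀ k, (J k).transpose = -(J k)) (p : GrpPt n m) :
    0 ≤ ∑ j, Bf J j p ∧
      ∑ j, Bf J j p ≤ (8*(2*n:ℝ) + 8 + 8 * (∑ k, ∑ j, ∑ i, (J k j i)^2)) * Sf p := by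
  have hS0 : 0 ≤ Sf p := Finset.sum_nonneg fun _ _ => sq_nonneg _
  have hBe : ∀ j, Bf J j p = 4 * Sf p + 8 * p.1 j ^ 2 + 8 * ∑ k, (Rowf J k j p)^2 :=
    fun j => Bf_eq J hskew j p
  have hcard : (Finset.univ : Finset (Fin (2*n))).card = 2*n := by simp
  have hsum : ∑ j, Bf J j p
      = 4 * (2*n:ℝ) * Sf p + 8 * Sf p + 8 * ∑ j, ∑ k, (Rowf J k j p)^2 := by
    simp_rw [hBe]
    rw [Finset.sum_add_distrib, Finset.sum_add_distrib, Finset.sum_const, hcard,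
      ← Finset.mul_sum, ← Finset.mul_sum]
    have : (∑ j, p.1 j ^2) = Sf p := rfl
    rw [this]
    ring
  have hrow : ∑ j, ∑ k, (Rowf J k j p)^2 ≤ (∑ k, ∑ j, ∑ i, (J k j i)^2) * Sf p := by
    rw [Finset.sum_comm, Finset.sum_mul]
    refine Finset.sum_le_sum fun k _ => ?_
    rw [Finset.sum_mul]
    refine Finset.sum_le_sum fun j _ => ?_
    have := Finset.sum_mul_sq_le_sq_mul_sq Finset.univ (fun i => J k j i) (fun i => p.1 i)
    simpa [Rowf, Sf] using this
  constructor
  · rw [hsum]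
    have h1 : 0 ≤ ∑ j, ∑ k, (Rowf J k j p)^2 :=
      Finset.sum_nonneg fun _ _ => Finset.sum_nonneg fun _ _ => sq_nonneg _
    positivity
  · rw [hsum]
    nlinarith [hrow]

lemma metivier (hn : 1 ≤ n) (hm : 1 ≤ m)
    (hMet : ∀ t : Fin m → ℝ, t ≠ 0 → IsUnit (∑ k, t k • J k)) :
    ∃ c₀ : ℝ, 0 < c₀ ∧ ∀ (t : Fin m → ℝ) (x : Fin (2*n) → ℝ),
      c₀ * ((∑ k, t k ^2) * (∑ i, x i ^2)) ≤ ∑ j, (∑ k, t k * ∑ i, J k j i * x i)^2 := by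
  classical
  set F : (Fin m → ℝ) × (Fin (2*n) → ℝ) → ℝ :=
    fun y => ∑ j, (∑ k, y.1 k * ∑ i, J k j i * y.2 i)^2 with hFdef
  have hFcont : Continuous F := by
    apply continuous_finset_sum; intro j _
    exact (continuous_finset_sum _ fun k _ =>
      ((continuous_apply k).comp continuous_fst).mul
      (continuous_finset_sum _ fun i _ =>
        continuous_const.mul ((continuous_apply i).comp continuous_snd))).pow 2
  set K : Set ((Fin m → ℝ) × (Fin (2*n) → ℝ)) :=
    {y | (∑ k, y.1 k ^2) = 1} ∩ {y | (∑ i, y.2 i ^2) = 1} with hKdef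
  have hKc : IsClosed K := by
    refine IsClosed.inter ?_ ?_
    · exact isClosed_eq (continuous_finset_sum _ fun k _ =>
        ((continuous_apply k).comp continuous_fst).pow 2) continuous_const
    · exact isClosed_eq (continuous_finset_sum _ fun i _ =>
        ((continuous_apply i).comp continuous_snd).pow 2) continuous_const
  have single_sum : ∀ (N:ℕ) (i0 : Fin N), (∑ i, ((Pi.single i0 1 : Fin N → ℝ) i)^2) = 1 := by
    intro N i0
    rw [Finset.sum_eq_single i0]
    · simp
    · intro b _ hb; rw [Pi.single_eq_of_ne hb]; simp
    · intro h; exact absurd (Finset.mem_univ i0) h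
  have hKne : K.Nonempty := by
    refine ⟨(Pi.single (⟨0, hm⟩ : Fin m) (1:ℝ), Pi.single (⟨0, by omega⟩ : Fin (2*n)) (1:ℝ)), ?_, ?_⟩
    · exact single_sum m _
    · exact single_sum (2*n) _
  have hKsub : K ⊆ Metric.closedBall 0 1 := by
    intro y hy
    rw [Metric.mem_closedBall, dist_zero_right, Prod.norm_def]
    have habs : ∀ {N : ℕ} (z : Fin N → ℝ), (∑ i, z i ^2) = 1 → ‖z‖ ≤ 1 := by
      intro N z hz
      refine (pi_norm_le_iff_of_nonneg zero_le_one).mpr fun i => ?_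
      rw [Real.norm_eq_abs]
      have h1 : z i ^ 2 ≤ 1 := by
        have := Finset.single_le_sum (f := fun i => z i ^2) (fun i _ => sq_nonneg _)
          (Finset.mem_univ i)
        rw [hz] at this; exact this
      rw [abs_le]; constructor <;> nlinarith
    exact max_le (habs y.1 hy.1) (habs y.2 hy.2)
  have hKcpt : IsCompact K :=
    (isCompact_closedBall (0:(Fin m → ℝ) × (Fin (2*n) → ℝ)) 1).of_isClosed_subset hKc hKsub
  have hFpos : ∀ y ∈ K, 0 < F y := by
    rintro y ⟨hy1, hy2⟩
    have hF0 : 0 ≤ F y := Finset.sum_nonneg fun _ _ => sq_nonneg _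
    rcases lt_or_eq_of_le hF0 with h | h
    · exact h
    exfalso
    have hy1' : (∑ k, y.1 k ^2) = 1 := hy1
    have hy2' : (∑ i, y.2 i ^2) = 1 := hy2
    have ht0 : y.1 ≠ 0 := by
      intro h0
      rw [h0] at hy1'
      simp at hy1'
    have hU := hMet y.1 ht0
    have hz : ∀ j, (∑ k, y.1 k • J k).mulVec y.2 j
        = ∑ k, y.1 k * ∑ i, J k j i * y.2 i := by
      intro j
      have h1 : (∑ k, y.1 k • J k).mulVec y.2 j = ∑ i, (∑ k, y.1 k * J k j i) * y.2 i := by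
        simp [Matrix.mulVec, dotProduct, Matrix.sum_apply, Matrix.smul_apply,
          smul_eq_mul]
      rw [h1]
      simp_rw [Finset.sum_mul]
      rw [Finset.sum_comm]
      refine Finset.sum_congr rfl fun k _ => ?_
      rw [Finset.mul_sum]
      refine Finset.sum_congr rfl fun i _ => by ring
    have hzero : ∀ j, (∑ k, y.1 k * ∑ i, J k j i * y.2 i) = 0 := by
      have := (Finset.sum_eq_zero_iff_of_nonneg (fun j _ => sq_nonneg
        (∑ k, y.1 k * ∑ i, J k j i * y.2 i))).mp h.symm
      intro j
      have hj := this j (Finset.mem_univ j)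
      exact pow_eq_zero_iff (two_ne_zero) |>.mp hj
    have hmv : (∑ k, y.1 k • J k).mulVec y.2 = 0 := by
      funext j; rw [hz j, hzero j]; rfl
    have hinj := Matrix.mulVec_injective_iff_isUnit.mpr hU
    have hx0 : y.2 = 0 := by
      apply hinj
      rw [hmv, Matrix.mulVec_zero]
    rw [hx0] at hy2'
    simp at hy2'
  obtain ⟨y₀, hy₀K, hmin⟩ := hKcpt.exists_isMinOn hKne hFcont.continuousOn
  refine ⟨F y₀, hFpos y₀ hy₀K, ?_⟩
  intro t x
  have hRHS0 : (0:ℝ) ≤ ∑ j, (∑ k, t k * ∑ i, J k j i * x i)^2 :=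
    Finset.sum_nonneg fun _ _ => sq_nonneg _
  rcases eq_or_ne t 0 with rfl | ht
  · simp [hRHS0]
  rcases eq_or_ne x 0 with rfl | hx
  · simp [hRHS0]
  have hT : 0 < ∑ k, t k ^2 := by
    obtain ⟨k0, hk0⟩ := Function.ne_iff.mp ht
    exact Finset.sum_pos' (fun _ _ => sq_nonneg _)
      ⟨k0, Finset.mem_univ _, pow_two_pos_of_ne_zero hk0⟩
  have hS : 0 < ∑ i, x i ^2 := by
    obtain ⟨i0, hi0⟩ := Function.ne_iff.mp hx
    exact Finset.sum_pos' (fun _ _ => sq_nonneg _)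
      ⟨i0, Finset.mem_univ _, pow_two_pos_of_ne_zero hi0⟩
  set a := Real.sqrt (∑ k, t k ^2) with hadef
  set b := Real.sqrt (∑ i, x i ^2) with hbdef
  have ha : 0 < a := Real.sqrt_pos.mpr hT
  have hb : 0 < b := Real.sqrt_pos.mpr hS
  have ha2 : a^2 = ∑ k, t k ^2 := Real.sq_sqrt hT.le
  have hb2 : b^2 = ∑ i, x i ^2 := Real.sq_sqrt hS.le
  set y : (Fin m → ℝ) × (Fin (2*n) → ℝ) := (a⁻¹ • t, b⁻¹ • x) with hydef
  have hyK : y ∈ K := by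
    constructor
    · show (∑ k, (a⁻¹ * t k)^2) = 1
      simp_rw [mul_pow, ← Finset.mul_sum]
      rw [← ha2]
      field_simp
    · show (∑ i, (b⁻¹ * x i)^2) = 1
      simp_rw [mul_pow, ← Finset.mul_sum]
      rw [← hb2]
      field_simp
  have hFy : F y = (a⁻¹ * b⁻¹)^2 * ∑ j, (∑ k, t k * ∑ i, J k j i * x i)^2 := by
    rw [hFdef]
    simp only
    have hinner : ∀ j, ∑ k, (a⁻¹ * t k) * ∑ i, J k j i * (b⁻¹ * x i)
        = (a⁻¹ * b⁻¹) * ∑ k, t k * ∑ i, J k j i * x i := by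
      intro j
      have h1 : ∀ k, (∑ i, J k j i * (b⁻¹ * x i)) = b⁻¹ * ∑ i, J k j i * x i := by
        intro k
        rw [Finset.mul_sum]
        exact Finset.sum_congr rfl fun i _ => by ring
      simp_rw [h1]
      rw [Finset.mul_sum]
      exact Finset.sum_congr rfl fun k _ => by ring
    have : ∀ j, (∑ k, y.1 k * ∑ i, J k j i * y.2 i)
        = (a⁻¹ * b⁻¹) * ∑ k, t k * ∑ i, J k j i * x i := by
      intro j
      rw [← hinner j]
      rfl
    simp_rw [this, mul_pow, ← Finset.mul_sum]
  have hmy : F y₀ ≤ F y := hmin hyK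
  rw [hFy] at hmy
  have hab2 : (a⁻¹ * b⁻¹)^2 = ((∑ k, t k ^2) * (∑ i, x i ^2))⁻¹ := by
    rw [mul_pow, ← ha2, ← hb2]
    field_simp
  rw [hab2] at hmy
  have hP : 0 < (∑ k, t k ^2) * (∑ i, x i ^2) := mul_pos hT hS
  calc F y₀ * ((∑ k, t k ^2) * (∑ i, x i ^2))
      ≤ (((∑ k, t k ^2) * (∑ i, x i ^2))⁻¹ * ∑ j, (∑ k, t k * ∑ i, J k j i * x i)^2)
        * ((∑ k, t k ^2) * (∑ i, x i ^2)) := by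
        exact mul_le_mul_of_nonneg_right hmy hP.le
    _ = ∑ j, (∑ k, t k * ∑ i, J k j i * x i)^2 := by
        field_simp

lemma Uf_pos (p : GrpPt n m) (hp : p ≠ 0) : 0 < Uf p := by
  have hS0 : 0 ≤ Sf p := Finset.sum_nonneg fun _ _ => sq_nonneg _
  have hT0 : 0 ≤ Tf p := Finset.sum_nonneg fun _ _ => sq_nonneg _
  rcases lt_or_eq_of_le (show (0:ℝ) ≤ Uf p by unfold Uf; positivity) with h | h
  · exact h
  exfalso
  have hU : Uf p = 0 := h.symm
  have hS : Sf p = 0 := by unfold Uf at hU; nlinarith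
  have hT : Tf p = 0 := by unfold Uf at hU; nlinarith
  apply hp
  have h1 : p.1 = 0 := by
    funext i
    have := (Finset.sum_eq_zero_iff_of_nonneg (fun i _ => sq_nonneg (p.1 i))).mp hS i
      (Finset.mem_univ i)
    exact pow_eq_zero_iff two_ne_zero |>.mp this
  have h2 : p.2 = 0 := by
    funext k
    have := (Finset.sum_eq_zero_iff_of_nonneg (fun k _ => sq_nonneg (p.2 k))).mp hT k
      (Finset.mem_univ k)
    exact pow_eq_zero_iff two_ne_zero |>.mp this
  exact Prod.ext h1 h2

set_option maxHeartbeats 2000000 in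
lemma final_arith (α M c₁ C₁ C₂ D X S r Q R Sa Sb P1 P2 P3 P4 P5 V : ℝ)
    (hα : 2 < α)
    (hc₁ : 0 < c₁) (hC₁0 : 0 ≤ C₁) (hC₂0 : 0 ≤ C₂)
    (hD : D = 8*(α/4)*|α/4-1| *C₁ + (1/2)*(α/4)*C₂)
    (hS1 : 1 < S) (hr : 0 < r)
    (hQ0 : 0 ≤ Q) (hf1 : 16*c₁*(S*r) ≤ Q) (hf2 : Q ≤ 16*C₁*(S*r))
    (hR0 : 0 ≤ R) (hRup : R ≤ C₂*S)
    (hP1 : 0 < P1) (hP2 : 0 < P2) (hP3 : 0 < P3) (hP5 : 0 < P5)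
    (e0 : P1^2 = P3) (e1 : P3 * r = P4) (e2 : P2 * r = P1)
    (e3 : P5 * P5 = P4) (e4 : S * Sb = Sa) (e5 : Sb ≤ P5) (e6 : S * P1 ≤ P5)
    (e7 : 1 ≤ P5)
    (hXS : X < Sa) (hX4 : (4*(α/4)^2*c₁) * X = M + D + 1)
    (hV : V = -(1/4) * (α/4)^2 * P1^2 * Q
        + (1/2) * ((α/4)^2 * P3 - (α/4)*(α/4-1) * P2) * Q
        - (1/2) * (α/4) * P1 * R)
    (hVM : V ≤ M) (hM : 0 < M) : False := by
  have haa : 0 < α/4 := by linarith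
  have hS0 : 0 < S := by linarith
  have c1n : (0:ℝ) ≤ (1/4)*(α/4)^2 := by positivity
  have m1 : ((1/4)*(α/4)^2) * (16*c₁*(S*r)) * P3 ≤ ((1/4)*(α/4)^2) * Q * P3 :=
    mul_le_mul_of_nonneg_right (mul_le_mul_of_nonneg_left hf1 c1n) hP3.le
  have m2 : (α/4-1)*(P2*Q) ≤ |α/4-1| *(16*C₁*(S*(P2*r))) := by
    have s1 : (α/4-1)*(P2*Q) ≤ |α/4-1| *(P2*Q) :=
      mul_le_mul_of_nonneg_right (le_abs_self _) (mul_nonneg hP2.le hQ0)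
    have s2 : P2*Q ≤ P2*(16*C₁*(S*r)) := mul_le_mul_of_nonneg_left hf2 hP2.le
    have s3 : |α/4-1| *(P2*Q) ≤ |α/4-1| *(P2*(16*C₁*(S*r))) :=
      mul_le_mul_of_nonneg_left s2 (abs_nonneg _)
    have e : |α/4-1| *(P2*(16*C₁*(S*r))) = |α/4-1| *(16*C₁*(S*(P2*r))) := by ring
    linarith
  have m3 : P1*R ≤ C₂*(S*P1) := by
    have h := mul_le_mul_of_nonneg_left hRup hP1.le
    have e : P1*(C₂*S) = C₂*(S*P1) := by ring
    linarith [h, e]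
  have hVlow : 4*(α/4)^2*c₁*(S*P4) - 8*(α/4)*|α/4-1| *C₁*(S*P1)
      - (1/2)*(α/4)*C₂*(S*P1) ≤ V := by
    rw [hV]
    have q2 : (1/2)*(α/4)*((α/4-1)*(P2*Q))
        ≤ (1/2)*(α/4)*(|α/4-1| *(16*C₁*(S*(P2*r)))) :=
      mul_le_mul_of_nonneg_left m2 (by linarith)
    have q3 : (1/2)*(α/4)*(P1*R) ≤ (1/2)*(α/4)*(C₂*(S*P1)) :=
      mul_le_mul_of_nonneg_left m3 (by linarith)
    have E0 : (1/4)*(α/4)^2 * (P1^2*Q) = (1/4)*(α/4)^2 * (P3*Q) := by rw [e0]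
    have E1 : 4*(α/4)^2*c₁*(S*(P3*r)) = 4*(α/4)^2*c₁*(S*P4) := by rw [e1]
    have E2 : (1/2)*(α/4)*(|α/4-1| *(16*C₁*(S*(P2*r))))
        = 8*(α/4)*|α/4-1| *C₁*(S*P1) := by rw [e2]; ring
    linarith [m1, q2, q3, E0, E1, E2]
  have g1 : P5 * Sa ≤ S * P4 := by
    have h := mul_le_mul_of_nonneg_left e5 (mul_nonneg hS0.le hP5.le)
    calc P5 * Sa = (S*P5)*Sb := by rw [← e4]; ring
      _ ≤ (S*P5)*P5 := h
      _ = S*P4 := by rw [← e3]; ring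
  have h4ac : (0:ℝ) < 4*(α/4)^2*c₁ :=
    mul_pos (mul_pos four_pos (pow_pos haa 2)) hc₁
  have m4 := mul_le_mul_of_nonneg_left g1 h4ac.le
  have hco : (0:ℝ) ≤ 8*(α/4)*|α/4-1| *C₁ + (1/2)*(α/4)*C₂ := by
    have h1 : (0:ℝ) ≤ 8*(α/4)*|α/4-1| *C₁ :=
      mul_nonneg (mul_nonneg (by linarith) (abs_nonneg _)) hC₁0
    have h2 : (0:ℝ) ≤ (1/2)*(α/4)*C₂ := mul_nonneg (by linarith) hC₂0
    linarith
  have m5 := mul_le_mul_of_nonneg_left e6 hco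
  have hDP5 : P5 * D = 8*(α/4)*|α/4-1| * C₁ * P5 + (1/2)*(α/4)*C₂*P5 := by
    rw [hD]; ring
  have hVlow2 : P5 * (4*(α/4)^2*c₁*Sa - D) ≤ V := by
    linarith [hVlow, m4, m5, hDP5]
  have hbr : M + 1 < 4*(α/4)^2*c₁*Sa - D := by
    have h := mul_lt_mul_of_pos_left hXS h4ac
    linarith [h, hX4]
  have hP5b : 0 ≤ (P5 - 1) * (4*(α/4)^2*c₁*Sa - D) :=
    mul_nonneg (by linarith) (by linarith)
  linarith [hVlow2, hP5b, hVM, hbr]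

end Cyl


set_option maxHeartbeats 1000000 in
/-- For `α > 2` the sublevel sets of `V_α` are contained in cylinders. -/
theorem sublevel_in_cylinder (n m : ℕ) (hn : 1 ≤ n) (hm : 1 ≤ m)
    (J : Fin m → Matrix (Fin (2*n)) (Fin (2*n)) ℝ)
    (hskew : ∀ k, (J k).transpose = -(J k))
    (hMet : ∀ t : Fin m → ℝ, t ≠ 0 → IsUnit (∑ k, t k • J k))
    (α : ℝ) (hα : 2 < α) :
    ∀ M : ℝ, 0 < M → ∃ c : ℝ, 0 < c ∧
      ∀ p : GrpPt n m, p ≠ 0 → VA J α p ≤ M → e2norm p.1 ≤ c := by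
  intro M hM
  have haa : 0 < α/4 := by linarith
  obtain ⟨c₀, hc₀, hMetB⟩ := Cyl.metivier J hn hm hMet
  obtain ⟨c₁, hc₁, hc₁1, hc₁0⟩ : ∃ c₁ : ℝ, 0 < c₁ ∧ c₁ ≤ 1 ∧ c₁ ≤ c₀ :=
    ⟨min 1 c₀, lt_min one_pos hc₀, min_le_left _ _, min_le_right _ _⟩
  obtain ⟨Fc, hFc0, hZup, hRup⟩ : ∃ Fc : ℝ, 0 ≤ Fc ∧
      (∀ p : GrpPt n m, Cyl.Zf J p ≤ Fc * (Cyl.Tf p * Cyl.Sf p)) ∧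
      (∀ p : GrpPt n m, ∑ j, Cyl.Bf J j p ≤ (8*(2*n:ℝ) + 8 + 8 * Fc) * Cyl.Sf p) :=
    ⟨∑ k, ∑ j, ∑ i, (J k j i)^2,
      Finset.sum_nonneg fun _ _ => Finset.sum_nonneg fun _ _ =>
        Finset.sum_nonneg fun _ _ => sq_nonneg _,
      fun p => Cyl.Z_upper J p, fun p => (Cyl.Rsum_bounds J hskew p).2⟩
  obtain ⟨C₁, hC₁0, hC₁1, hC₁F⟩ : ∃ C₁ : ℝ, 0 ≤ C₁ ∧ (1:ℝ) ≤ C₁ ∧ Fc ≤ C₁ :=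
    ⟨max 1 Fc, le_trans zero_le_one (le_max_left _ _), le_max_left _ _, le_max_right _ _⟩
  set C₂ : ℝ := 8*(2*n:ℝ) + 8 + 8 * Fc with hC₂def
  have hC₂0 : 0 ≤ C₂ := by
    rw [hC₂def]
    have h2n : (0:ℝ) ≤ (2*n:ℝ) := by positivity
    linarith
  set D : ℝ := 8*(α/4)*|α/4-1| * C₁ + (1/2)*(α/4)*C₂ with hDdef
  have h4ac : (0:ℝ) < 4*(α/4)^2*c₁ := mul_pos (mul_pos four_pos (pow_pos haa 2)) hc₁
  have hD0 : 0 ≤ D := by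
    rw [hDdef]
    have h1 : (0:ℝ) ≤ 8*(α/4)*|α/4-1| * C₁ :=
      mul_nonneg (mul_nonneg (by linarith) (abs_nonneg _)) hC₁0
    have h2 : (0:ℝ) ≤ (1/2)*(α/4)*C₂ := mul_nonneg (by linarith) hC₂0
    linarith
  obtain ⟨X, hX, hX4⟩ : ∃ X : ℝ, 0 < X ∧ (4*(α/4)^2*c₁) * X = M + D + 1 := by
    refine ⟨(M + D + 1)/(4*(α/4)^2*c₁), div_pos (by linarith) h4ac, ?_⟩
    field_simp
  refine ⟨max 1 (X ^ ((1:ℝ)/α)), lt_of_lt_of_le one_pos (le_max_left _ _), ?_⟩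
  intro p hp0 hVA
  by_contra hcon
  push_neg at hcon
  have hc1 : (1:ℝ) ≤ max 1 (X ^ ((1:ℝ)/α)) := le_max_left _ _
  have hcX : X ^ ((1:ℝ)/α) ≤ max 1 (X ^ ((1:ℝ)/α)) := le_max_right _ _
  have hr : 0 < Cyl.Uf p := Cyl.Uf_pos p hp0
  have hS0 : (0:ℝ) ≤ Cyl.Sf p := Finset.sum_nonneg fun _ _ => sq_nonneg _
  have hT0 : (0:ℝ) ≤ Cyl.Tf p := Finset.sum_nonneg fun _ _ => sq_nonneg _
  have hen : e2norm p.1 = Real.sqrt (Cyl.Sf p) := rfl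
  have hsq : Real.sqrt (Cyl.Sf p) ^ 2 = Cyl.Sf p := Real.sq_sqrt hS0
  have hsgt : (1:ℝ) < Real.sqrt (Cyl.Sf p) := by
    rw [← hen]; linarith
  have hS1 : 1 < Cyl.Sf p := by nlinarith [hsgt, hsq]
  have hSpos : 0 < Cyl.Sf p := by linarith
  have hUeq : Cyl.Uf p = Cyl.Sf p^2 + 16*Cyl.Tf p := rfl
  have hSSr : Cyl.Sf p^2 ≤ Cyl.Uf p := by rw [hUeq]; linarith
  have hr1 : (1:ℝ) ≤ Cyl.Uf p := by nlinarith
  have hQ0 : (0:ℝ) ≤ ∑ j, (Cyl.Af J j p)^2 := Finset.sum_nonneg fun _ _ => sq_nonneg _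
  have hQeq := Cyl.Q_eq J hskew p
  have hZlow : c₀ * (Cyl.Tf p * Cyl.Sf p) ≤ Cyl.Zf J p := by
    have h := hMetB p.2 p.1
    unfold Cyl.Zf Cyl.Rowf Cyl.Tf Cyl.Sf
    exact h
  have hf1 : 16*c₁*(Cyl.Sf p * Cyl.Uf p) ≤ ∑ j, (Cyl.Af J j p)^2 := by
    rw [hQeq, hUeq]
    have ha := mul_nonneg (sub_nonneg.mpr hc₁0) (mul_nonneg hT0 hS0)
    have hb := mul_nonneg (sub_nonneg.mpr hc₁1) (pow_nonneg hS0 3)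
    linarith [hZlow, ha, hb]
  have hf2 : (∑ j, (Cyl.Af J j p)^2) ≤ 16*C₁*(Cyl.Sf p * Cyl.Uf p) := by
    rw [hQeq, hUeq]
    have ha := mul_nonneg (sub_nonneg.mpr hC₁F) (mul_nonneg hT0 hS0)
    have hb := mul_nonneg (sub_nonneg.mpr hC₁1) (pow_nonneg hS0 3)
    linarith [hZup p, ha, hb]
  have hR0 : (0:ℝ) ≤ ∑ j, Cyl.Bf J j p := (Cyl.Rsum_bounds J hskew p).1
  have hRC : (∑ j, Cyl.Bf J j p) ≤ C₂ * Cyl.Sf p := by rw [hC₂def]; exact hRup p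
  have hP1 : 0 < Cyl.Uf p ^ (α/4 - 1 : ℝ) := Real.rpow_pos_of_pos hr _
  have hP2 : 0 < Cyl.Uf p ^ (α/4 - 2 : ℝ) := Real.rpow_pos_of_pos hr _
  have hP3 : 0 < Cyl.Uf p ^ (α/2 - 2 : ℝ) := Real.rpow_pos_of_pos hr _
  have hP5 : 0 < Cyl.Uf p ^ (α/4 - 1/2 : ℝ) := Real.rpow_pos_of_pos hr _
  have e0 : (Cyl.Uf p ^ (α/4 - 1 : ℝ))^2 = Cyl.Uf p ^ (α/2 - 2 : ℝ) := by
    rw [← Real.rpow_natCast (Cyl.Uf p ^ (α/4 - 1 : ℝ)) 2, ← Real.rpow_mul hr.le]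
    congr 1
    push_cast
    ring
  have e1 : Cyl.Uf p ^ (α/2 - 2 : ℝ) * Cyl.Uf p = Cyl.Uf p ^ (α/2 - 1 : ℝ) := by
    have h := (Real.rpow_add hr (α/2-2) 1).symm
    rw [Real.rpow_one] at h
    rw [h]; congr 1; ring
  have e2 : Cyl.Uf p ^ (α/4 - 2 : ℝ) * Cyl.Uf p = Cyl.Uf p ^ (α/4 - 1 : ℝ) := by
    have h := (Real.rpow_add hr (α/4-2) 1).symm
    rw [Real.rpow_one] at h
    rw [h]; congr 1; ring
  have e3 : Cyl.Uf p ^ (α/4 - 1/2 : ℝ) * Cyl.Uf p ^ (α/4 - 1/2 : ℝ)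
      = Cyl.Uf p ^ (α/2 - 1 : ℝ) := by
    rw [← Real.rpow_add hr]; congr 1; ring
  have e4 : Cyl.Sf p * Cyl.Sf p ^ (α/2 - 1 : ℝ) = Cyl.Sf p ^ (α/2 : ℝ) := by
    nth_rewrite 1 [← Real.rpow_one (Cyl.Sf p)]
    rw [← Real.rpow_add hSpos]; congr 1; ring
  have e5 : Cyl.Sf p ^ (α/2 - 1 : ℝ) ≤ Cyl.Uf p ^ (α/4 - 1/2 : ℝ) := by
    have h1 : (Cyl.Sf p^2 : ℝ) ^ (α/4 - 1/2 : ℝ) ≤ Cyl.Uf p ^ (α/4 - 1/2 : ℝ) :=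
      Real.rpow_le_rpow (by positivity) hSSr (by linarith)
    have h2 : (Cyl.Sf p^2 : ℝ) ^ (α/4 - 1/2 : ℝ) = Cyl.Sf p ^ (α/2 - 1 : ℝ) := by
      rw [← Real.rpow_natCast (Cyl.Sf p) 2, ← Real.rpow_mul hS0]
      congr 1; push_cast; ring
    linarith [h1, h2]
  have e6 : Cyl.Sf p * Cyl.Uf p ^ (α/4 - 1 : ℝ) ≤ Cyl.Uf p ^ (α/4 - 1/2 : ℝ) := by
    have hs12 : Cyl.Sf p ≤ Cyl.Uf p ^ ((1:ℝ)/2) := by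
      rw [← Real.sqrt_eq_rpow]
      rw [show Cyl.Sf p = Real.sqrt (Cyl.Sf p^2) from (Real.sqrt_sq hS0).symm]
      exact Real.sqrt_le_sqrt hSSr
    calc Cyl.Sf p * Cyl.Uf p ^ (α/4 - 1 : ℝ)
        ≤ Cyl.Uf p ^ ((1:ℝ)/2) * Cyl.Uf p ^ (α/4 - 1 : ℝ) :=
          mul_le_mul_of_nonneg_right hs12 hP1.le
      _ = Cyl.Uf p ^ (α/4 - 1/2 : ℝ) := by rw [← Real.rpow_add hr]; congr 1; ring
  have e7 : (1:ℝ) ≤ Cyl.Uf p ^ (α/4 - 1/2 : ℝ) := by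
    calc (1:ℝ) = 1 ^ (α/4 - 1/2 : ℝ) := (Real.one_rpow _).symm
      _ ≤ Cyl.Uf p ^ (α/4 - 1/2 : ℝ) := Real.rpow_le_rpow zero_le_one hr1 (by linarith)
  have hXS : X < Cyl.Sf p ^ (α/2 : ℝ) := by
    have hsa : Cyl.Sf p ^ (α/2 : ℝ) = (e2norm p.1) ^ (α : ℝ) := by
      rw [hen, Real.sqrt_eq_rpow, ← Real.rpow_mul hS0]
      congr 1; ring
    have h1 : (max 1 (X ^ ((1:ℝ)/α))) ^ (α:ℝ) < (e2norm p.1)^(α:ℝ) :=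
      Real.rpow_lt_rpow (by linarith) hcon (by linarith)
    have h2 : X ≤ (max 1 (X ^ ((1:ℝ)/α))) ^ (α:ℝ) := by
      have hXc : (X ^ ((1:ℝ)/α)) ^ (α:ℝ) = X := by
        rw [← Real.rpow_mul hX.le, one_div_mul_cancel (by linarith : α ≠ 0), Real.rpow_one]
      calc X = (X ^ ((1:ℝ)/α)) ^ (α:ℝ) := hXc.symm
        _ ≤ (max 1 (X ^ ((1:ℝ)/α))) ^ (α:ℝ) :=
          Real.rpow_le_rpow (Real.rpow_nonneg hX.le _) hcX (by linarith)
    rw [hsa]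
    linarith
  exact Cyl.final_arith α M c₁ C₁ C₂ D X (Cyl.Sf p) (Cyl.Uf p)
    (∑ j, (Cyl.Af J j p)^2) (∑ j, Cyl.Bf J j p)
    (Cyl.Sf p ^ (α/2 : ℝ)) (Cyl.Sf p ^ (α/2 - 1 : ℝ))
    (Cyl.Uf p ^ (α/4 - 1 : ℝ)) (Cyl.Uf p ^ (α/4 - 2 : ℝ)) (Cyl.Uf p ^ (α/2 - 2 : ℝ))
    (Cyl.Uf p ^ (α/2 - 1 : ℝ)) (Cyl.Uf p ^ (α/4 - 1/2 : ℝ)) (VA J α p)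
    hα hc₁ hC₁0 hC₂0 hDdef hS1 hr hQ0 hf1 hf2 hR0 hRC hP1 hP2 hP3 hP5
    e0 e1 e2 e3 e4 e5 e6 e7 hXS hX4 (Cyl.VA_eq J α p hr) hVA hM

end
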